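/- Assume M = +∞ and lim_{x→∞} φ(x) / ∫_x^∞ φ(u)du = c > 0, where φ(x) = ∫_x^∞(1−F(u))du (assumed integrable at +∞). Then lim_{x→∞} φ(x)·∫_{μ₀}^x du/φ(u) = 1/c; consequently, if μ solves μ' = λφ(μ), μ(0)=μ₀, then lim_{t→∞} t·μ'(t) = 1/c and lim_{t→∞} μ(t)/ln t = 1/c. -/

import Mathlib

open MeasureTheory Set Filter


section TailHelpers

variable {g : ℝ → ℝ} {a b x : ℝ}

lemma tail_sub (hgi : IntegrableOn g (Ioi a) volume) (hab : a ≤ b) :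
    (∫ u in Ioi a, g u) - ∫ u in Ioi b, g u = ∫ u in a..b, g u := by
  have hsplit : Ioc a b ∪ Ioi b = Ioi a := Ioc_union_Ioi_eq_Ioi hab
  have h1 : IntegrableOn g (Ioc a b) volume := hgi.mono_set Ioc_subset_Ioi_self
  have h2 : IntegrableOn g (Ioi b) volume := hgi.mono_set (Ioi_subset_Ioi hab)
  have hu := setIntegral_union (Ioc_disjoint_Ioi le_rfl) measurableSet_Ioi h1 h2 (f := g)
    (μ := volume)
  rw [hsplit] at hu
  rw [intervalIntegral.integral_of_le hab]
  linarith

lemma tail_pos (hanti : Antitone g) (hpos : ∀ x, 0 < g x)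
    (hgi : IntegrableOn g (Ioi x) volume) : 0 < ∫ u in Ioi x, g u := by
  have h1 : IntegrableOn g (Ioc x (x+1)) volume := hgi.mono_set Ioc_subset_Ioi_self
  have h2 : g (x+1) ≤ ∫ u in Ioc x (x+1), g u := by
    have h := setIntegral_mono_on (integrableOn_const (by simp)) h1
      measurableSet_Ioc (fun u hu => hanti hu.2)
    simpa [Real.volume_Ioc] using h
  have h3 : (∫ u in Ioc x (x+1), g u) ≤ ∫ u in Ioi x, g u :=
    setIntegral_mono_set hgi (Eventually.of_forall fun u => (hpos u).le)
      (Ioc_subset_Ioi_self).eventuallyLE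
  linarith [hpos (x+1)]

lemma tail_anti (hgi : ∀ x : ℝ, IntegrableOn g (Ioi x) volume) (hg0 : ∀ u, 0 ≤ g u) :
    Antitone (fun x => ∫ u in Ioi x, g u) := fun a b hab =>
  setIntegral_mono_set (hgi a) (Eventually.of_forall hg0) ((Ioi_subset_Ioi hab).eventuallyLE)

lemma hasDerivAt_tail (hcont : Continuous g) (hgi : ∀ x : ℝ, IntegrableOn g (Ioi x) volume)
    (x : ℝ) : HasDerivAt (fun y => ∫ u in Ioi y, g u) (-(g x)) x := by
  have heq : ∀ y, ∫ u in Ioi y, g u = (∫ u in Ioi 0, g u) - ∫ u in (0:ℝ)..y, g u := by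
    intro y
    rcases le_total (0:ℝ) y with h | h
    · have := tail_sub (hgi 0) h; linarith
    · have := tail_sub (hgi y) h
      rw [intervalIntegral.integral_symm]; linarith
  have hd : HasDerivAt (fun y => ∫ u in (0:ℝ)..y, g u) (g x) x :=
    intervalIntegral.integral_hasDerivAt_right (hcont.intervalIntegrable _ _)
      (hcont.stronglyMeasurableAtFilter _ _) hcont.continuousAt
  have hd2 : HasDerivAt (fun y => (∫ u in Ioi 0, g u) - ∫ u in (0:ℝ)..y, g u) (-(g x)) x :=
    hd.const_sub _
  exact hd2.congr_of_eventuallyEq (Eventually.of_forall heq)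

lemma tail_tendsto_zero (hgi : ∀ x : ℝ, IntegrableOn g (Ioi x) volume) :
    Tendsto (fun x => ∫ u in Ioi x, g u) atTop (nhds 0) := by
  have h := intervalIntegral_tendsto_integral_Ioi 0 (hgi 0) tendsto_id
  have h2 : Tendsto (fun x => (∫ u in Ioi 0, g u) - ∫ u in (0:ℝ)..x, g u) atTop
      (nhds ((∫ u in Ioi 0, g u) - ∫ u in Ioi 0, g u)) := tendsto_const_nhds.sub h
  rw [sub_self] at h2
  refine h2.congr' (eventually_atTop.2 ⟨0, fun x hx => ?_⟩)
  have := tail_sub (hgi 0) hx; linarith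

lemma integral_exp_aux {a : ℝ} (ha : a ≠ 0) (X x : ℝ) :
    ∫ u in X..x, Real.exp (a*(u - x)) = (1 - Real.exp (a*(X - x))) / a := by
  have hder : ∀ u ∈ uIcc X x, HasDerivAt (fun u => Real.exp (a*(u - x)) / a)
      (Real.exp (a*(u-x))) u := by
    intro u _
    have h : HasDerivAt (fun u : ℝ => a*(u-x)) a u := by
      simpa using ((hasDerivAt_id u).sub_const x).const_mul a
    have h2 := ((Real.hasDerivAt_exp _).comp u h).div_const a
    simpa [mul_comm, mul_div_cancel_left₀ _ ha] using h2
  rw [intervalIntegral.integral_eq_sub_of_hasDerivAt hder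
    ((Continuous.intervalIntegrable (by continuity) _ _))]
  rw [sub_self, mul_zero, Real.exp_zero]
  ring




lemma tail_exp_lower (hcont : Continuous g) (hgi : ∀ x : ℝ, IntegrableOn g (Ioi x) volume)
    {a X : ℝ} (hbound : ∀ u, X ≤ u → a * (∫ v in Ioi u, g v) ≤ g u) :
    ∀ u x, X ≤ u → u ≤ x →
      (∫ v in Ioi x, g v) * Real.exp (a * (x - u)) ≤ ∫ v in Ioi u, g v := by
  have hD : ∀ u : ℝ, HasDerivAt (fun y => (∫ v in Ioi y, g v) * Real.exp (a * y))
      ((a * (∫ v in Ioi u, g v) - g u) * Real.exp (a * u)) u := by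
    intro u
    have h1 := hasDerivAt_tail hcont hgi u
    have h2 : HasDerivAt (fun y : ℝ => Real.exp (a * y)) (a * Real.exp (a * u)) u := by
      have h3 : HasDerivAt (fun y : ℝ => a * y) a u := by
        simpa using (hasDerivAt_id u).const_mul a
      simpa [mul_comm, Function.comp_def] using (Real.hasDerivAt_exp _).comp u h3
    have := h1.mul h2
    exact this.congr_deriv (by ring)
  have hmono : AntitoneOn (fun y => (∫ v in Ioi y, g v) * Real.exp (a * y)) (Ici X) := by
    apply antitoneOn_of_deriv_nonpos (convex_Ici X)
    · exact fun y _ => ((hD y).continuousAt).continuousWithinAt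
    · exact fun y _ => ((hD y).differentiableAt).differentiableWithinAt
    · intro y hy
      rw [interior_Ici] at hy
      rw [(hD y).deriv]
      have := hbound y (le_of_lt hy)
      have he := Real.exp_pos (a * y)
      nlinarith
  intro u x hXu hux
  have h := hmono (mem_Ici.2 hXu) (mem_Ici.2 (hXu.trans hux)) hux
  have he := Real.exp_pos (a * u)
  rw [mul_sub, Real.exp_sub, mul_div_assoc', div_le_iff₀ he]
  exact h

lemma tail_exp_upper (hcont : Continuous g) (hgi : ∀ x : ℝ, IntegrableOn g (Ioi x) volume)
    {b X : ℝ} (hbound : ∀ u, X ≤ u → g u ≤ b * (∫ v in Ioi u, g v)) :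
    ∀ u x, X ≤ u → u ≤ x →
      (∫ v in Ioi u, g v) ≤ (∫ v in Ioi x, g v) * Real.exp (b * (x - u)) := by
  have hD : ∀ u : ℝ, HasDerivAt (fun y => (∫ v in Ioi y, g v) * Real.exp (b * y))
      ((b * (∫ v in Ioi u, g v) - g u) * Real.exp (b * u)) u := by
    intro u
    have h1 := hasDerivAt_tail hcont hgi u
    have h2 : HasDerivAt (fun y : ℝ => Real.exp (b * y)) (b * Real.exp (b * u)) u := by
      have h3 : HasDerivAt (fun y : ℝ => b * y) b u := by
        simpa using (hasDerivAt_id u).const_mul b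
      simpa [mul_comm, Function.comp_def] using (Real.hasDerivAt_exp _).comp u h3
    have := h1.mul h2
    exact this.congr_deriv (by ring)
  have hmono : MonotoneOn (fun y => (∫ v in Ioi y, g v) * Real.exp (b * y)) (Ici X) := by
    apply monotoneOn_of_deriv_nonneg (convex_Ici X)
    · exact fun y _ => ((hD y).continuousAt).continuousWithinAt
    · exact fun y _ => ((hD y).differentiableAt).differentiableWithinAt
    · intro y hy
      rw [interior_Ici] at hy
      rw [(hD y).deriv]
      have := hbound y (le_of_lt hy)
      have he := Real.exp_pos (b * y)
      nlinarith
  intro u x hXu hux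
  have h := hmono (mem_Ici.2 hXu) (mem_Ici.2 (hXu.trans hux)) hux
  have he := Real.exp_pos (b * u)
  rw [mul_sub, Real.exp_sub, mul_div_assoc', le_div_iff₀ he]
  exact h




set_option maxHeartbeats 1000000 in
lemma key_limit (hpos : ∀ x, 0 < g x) (hanti : Antitone g) (hcont : Continuous g)
    (hgi : ∀ x : ℝ, IntegrableOn g (Ioi x) volume) {c : ℝ} (hc : 0 < c)
    (hlim : Tendsto (fun x => g x / ∫ u in Ioi x, g u) atTop (nhds c)) (m : ℝ) :
    Tendsto (fun x => g x * ∫ u in m..x, (g u)⁻¹) atTop (nhds (1/c)) := by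
  set Ψ : ℝ → ℝ := fun y => ∫ u in Ioi y, g u with hΨdef
  have hΨpos : ∀ y, 0 < Ψ y := fun y => tail_pos hanti hpos (hgi y)
  have hinv : Continuous fun u => (g u)⁻¹ := hcont.inv₀ (fun u => (hpos u).ne')
  -- g tends to zero
  have hgleΨ : ∀ x : ℝ, g x ≤ Ψ (x - 1) := by
    intro x
    have h1 : IntegrableOn g (Ioc (x-1) x) volume := (hgi (x-1)).mono_set Ioc_subset_Ioi_self
    have h2 : g x ≤ ∫ u in Ioc (x-1) x, g u := by
      have h := setIntegral_mono_on (integrableOn_const (by simp)) h1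
        measurableSet_Ioc (fun u hu => hanti hu.2)
      simpa [Real.volume_Ioc] using h
    have h3 : (∫ u in Ioc (x-1) x, g u) ≤ Ψ (x-1) :=
      setIntegral_mono_set (hgi (x-1)) (Eventually.of_forall fun u => (hpos u).le)
        (Ioc_subset_Ioi_self).eventuallyLE
    linarith
  have hg0 : Tendsto g atTop (nhds 0) := by
    have hΨ0 : Tendsto (fun x => Ψ (x - 1)) atTop (nhds 0) := by
      have := (tail_tendsto_zero hgi).comp (tendsto_atTop_add_const_right atTop (-1) tendsto_id)
      simpa [sub_eq_add_neg, Function.comp_def] using this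
    exact tendsto_of_tendsto_of_tendsto_of_le_of_le tendsto_const_nhds hΨ0
      (fun x => (hpos x).le) hgleΨ
  rw [Metric.tendsto_nhds]
  intro η hη
  -- choose ε
  obtain ⟨ε, hεIoi, hε1, hε2, hεc⟩ : ∃ ε : ℝ, ε ∈ Ioi (0:ℝ) ∧
      (c+ε)/(c-ε)^2 < 1/c + η/4 ∧ 1/c - η/4 < (c-ε)/(c+ε)^2 ∧ ε < c := by
    have hc1 : ContinuousAt (fun ε : ℝ => (c+ε)/(c-ε)^2) 0 := by
      apply ContinuousAt.div (by fun_prop) (by fun_prop)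
      simpa using pow_ne_zero 2 hc.ne'
    have hc2 : ContinuousAt (fun ε : ℝ => (c-ε)/(c+ε)^2) 0 := by
      apply ContinuousAt.div (by fun_prop) (by fun_prop)
      simpa using pow_ne_zero 2 hc.ne'
    have hval : c / c^2 = 1/c := by field_simp [hc.ne']
    have e1 : ∀ᶠ ε in nhds (0:ℝ), (c+ε)/(c-ε)^2 < 1/c + η/4 := by
      refine hc1.eventually_lt_const ?_
      simpa [hval] using by linarith
    have e2 : ∀ᶠ ε in nhds (0:ℝ), 1/c - η/4 < (c-ε)/(c+ε)^2 := by
      refine hc2.eventually_const_lt ?_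
      simpa [hval] using by linarith
    have e3 : ∀ᶠ ε in nhds (0:ℝ), ε < c := eventually_lt_nhds hc
    have := ((e1.and (e2.and e3)).filter_mono (nhdsWithin_le_nhds (s := Ioi (0:ℝ)))).and
      self_mem_nhdsWithin
    obtain ⟨ε, ⟨h1, h2, h3⟩, h4⟩ := this.exists
    exact ⟨ε, h4, h1, h2, h3⟩
  rw [mem_Ioi] at hεIoi
  have hcε1 : 0 < c - ε := by linarith
  have hcε2 : 0 < c + ε := by linarith
  -- threshold X for the sandwich
  obtain ⟨X, hX⟩ := Metric.tendsto_atTop.1 hlim ε hεIoi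
  have hsand : ∀ u, X ≤ u → (c-ε) * Ψ u ≤ g u ∧ g u ≤ (c+ε) * Ψ u := by
    intro u hu
    have h := hX u hu
    rw [Real.dist_eq, abs_lt] at h
    have hp := hΨpos u
    have heq : g u / Ψ u * Ψ u = g u := by field_simp
    constructor
    · have h5 : c - ε < g u / Ψ u := by linarith
      nlinarith
    · have h5 : g u / Ψ u < c + ε := by linarith
      nlinarith
  have hlow := tail_exp_lower hcont hgi (a := c - ε) (X := X) (fun u hu => (hsand u hu).1)
  have hup := tail_exp_upper hcont hgi (b := c + ε) (X := X) (fun u hu => (hsand u hu).2)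
  -- pointwise bounds on the inverse
  have hptU : ∀ x, X ≤ x → ∀ u ∈ Icc X x,
      (g u)⁻¹ ≤ Real.exp ((c-ε)*(u - x)) / ((c-ε) * Ψ x) := by
    intro x hXx u hu
    have h1 : Ψ x * Real.exp ((c-ε)*(x - u)) ≤ Ψ u := hlow u x hu.1 hu.2
    have h2 : (c-ε) * Ψ u ≤ g u := (hsand u hu.1).1
    have hE := Real.exp_pos ((c-ε)*(x-u))
    have hden : 0 < (c-ε) * (Ψ x * Real.exp ((c-ε)*(x-u))) := mul_pos hcε1 (mul_pos (hΨpos x) hE)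
    have h3 : (c-ε) * (Ψ x * Real.exp ((c-ε)*(x-u))) ≤ g u := by nlinarith
    have h4 := inv_anti₀ hden h3
    refine h4.trans (le_of_eq ?_)
    rw [show (c-ε)*(u-x) = -((c-ε)*(x-u)) by ring, Real.exp_neg, div_eq_mul_inv, ← mul_inv]
    congr 1
    ring
  have hptL : ∀ x, X ≤ x → ∀ u ∈ Icc X x,
      Real.exp ((c+ε)*(u - x)) / ((c+ε) * Ψ x) ≤ (g u)⁻¹ := by
    intro x hXx u hu
    have h1 : Ψ u ≤ Ψ x * Real.exp ((c+ε)*(x - u)) := hup u x hu.1 hu.2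
    have h2 : g u ≤ (c+ε) * Ψ u := (hsand u hu.1).2
    have hE := Real.exp_pos ((c+ε)*(x-u))
    have h3 : g u ≤ (c+ε) * (Ψ x * Real.exp ((c+ε)*(x-u))) := by nlinarith
    have h4 := inv_anti₀ (hpos u) h3
    refine le_trans (le_of_eq ?_) h4
    rw [show (c+ε)*(u-x) = -((c+ε)*(x-u)) by ring, Real.exp_neg, div_eq_mul_inv, ← mul_inv]
    congr 1
    ring
  -- integral bounds
  have hI2U : ∀ x, X ≤ x → (∫ u in X..x, (g u)⁻¹) ≤ 1 / ((c-ε)^2 * Ψ x) := by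
    intro x hXx
    have hint1 : IntervalIntegrable (fun u => (g u)⁻¹) volume X x := hinv.intervalIntegrable _ _
    have hint2 : IntervalIntegrable (fun u => Real.exp ((c-ε)*(u - x)) / ((c-ε) * Ψ x))
        volume X x := Continuous.intervalIntegrable (by fun_prop) _ _
    have h := intervalIntegral.integral_mono_on hXx hint1 hint2 (hptU x hXx)
    have hcalc : (∫ u in X..x, Real.exp ((c-ε)*(u - x)) / ((c-ε) * Ψ x))
        = (1 - Real.exp ((c-ε)*(X - x))) / (c-ε) / ((c-ε) * Ψ x) := by
      rw [intervalIntegral.integral_div, integral_exp_aux hcε1.ne']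
    rw [hcalc] at h
    refine h.trans ?_
    have hE := Real.exp_pos ((c-ε)*(X-x))
    rw [div_div, show (c-ε) * ((c-ε) * Ψ x) = (c-ε)^2 * Ψ x by ring]
    have hden : 0 < (c-ε)^2 * Ψ x := mul_pos (pow_pos hcε1 2) (hΨpos x)
    gcongr
    linarith
  have hI2L : ∀ x, X ≤ x →
      (1 - Real.exp ((c+ε)*(X - x))) / (c+ε) / ((c+ε) * Ψ x) ≤ ∫ u in X..x, (g u)⁻¹ := by
    intro x hXx
    have hint1 : IntervalIntegrable (fun u => (g u)⁻¹) volume X x := hinv.intervalIntegrable _ _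
    have hint2 : IntervalIntegrable (fun u => Real.exp ((c+ε)*(u - x)) / ((c+ε) * Ψ x))
        volume X x := Continuous.intervalIntegrable (by fun_prop) _ _
    have h := intervalIntegral.integral_mono_on hXx hint2 hint1 (hptL x hXx)
    have hcalc : (∫ u in X..x, Real.exp ((c+ε)*(u - x)) / ((c+ε) * Ψ x))
        = (1 - Real.exp ((c+ε)*(X - x))) / (c+ε) / ((c+ε) * Ψ x) := by
      rw [intervalIntegral.integral_div, integral_exp_aux hcε2.ne']
    rwa [hcalc] at h
  -- split the integral
  have hsplit : ∀ x, (∫ u in m..x, (g u)⁻¹) = (∫ u in m..X, (g u)⁻¹) + ∫ u in X..x, (g u)⁻¹ :=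
    fun x => (intervalIntegral.integral_add_adjacent_intervals
      (hinv.intervalIntegrable _ _) (hinv.intervalIntegrable _ _)).symm
  set C := ∫ u in m..X, (g u)⁻¹ with hC
  have he1 : ∀ᶠ x in atTop, |g x * C| < η/4 := by
    have ht1 : Tendsto (fun x => g x * C) atTop (nhds 0) := by
      simpa using hg0.mul_const C
    have := Metric.tendsto_nhds.mp ht1 (η/4) (by linarith)
    simpa [Real.dist_eq, abs_mul] using this
  have hEtend : Tendsto (fun x => Real.exp ((c+ε)*(X - x))) atTop (nhds 0) := by
    apply Real.tendsto_exp_atBot.comp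
    have h1 : Tendsto (fun x : ℝ => X - x) atTop atBot := by
      simpa [sub_eq_add_neg] using tendsto_atBot_add_const_left atTop X (tendsto_neg_atTop_atBot)
    exact h1.const_mul_atBot hcε2
  have he2 : ∀ᶠ x in atTop, 1/c - η/4 < (c-ε) * Ψ x *
      ((1 - Real.exp ((c+ε)*(X - x))) / (c+ε) / ((c+ε) * Ψ x)) := by
    have hcongr : ∀ x : ℝ, (c-ε) * (1 - Real.exp ((c+ε)*(X - x))) / (c+ε)^2 = (c-ε) * Ψ x *
        ((1 - Real.exp ((c+ε)*(X - x))) / (c+ε) / ((c+ε) * Ψ x)) := by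
      intro x
      have := (hΨpos x).ne'
      field_simp
    have hq : Tendsto (fun x => (c-ε) * (1 - Real.exp ((c+ε)*(X - x))) / (c+ε)^2) atTop
        (nhds ((c-ε) * (1 - 0) / (c+ε)^2)) :=
      (tendsto_const_nhds.mul (tendsto_const_nhds.sub hEtend)).div_const _
    have hq2 := hq.eventually (eventually_gt_nhds (show 1/c - η/4 < (c-ε)*(1-0)/(c+ε)^2 by
      simpa using hε2))
    exact hq2.mono fun x hx => by rw [← hcongr x]; exact hx
  filter_upwards [he1, he2, eventually_ge_atTop X] with x h1 h2 h3
  rw [Real.dist_eq, abs_lt]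
  have hI2nn : 0 ≤ ∫ u in X..x, (g u)⁻¹ :=
    intervalIntegral.integral_nonneg h3 (fun u _ => (inv_pos.2 (hpos u)).le)
  have habs := abs_lt.1 h1
  have hgU : g x ≤ (c+ε) * Ψ x := (hsand x h3).2
  have hgL : (c-ε) * Ψ x ≤ g x := (hsand x h3).1
  have hΨx := hΨpos x
  -- upper bound for the main term
  have hmainU : g x * (∫ u in X..x, (g u)⁻¹) ≤ (c+ε) / (c-ε)^2 := by
    have h4 : g x * (∫ u in X..x, (g u)⁻¹) ≤ ((c+ε) * Ψ x) * (1 / ((c-ε)^2 * Ψ x)) :=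
      mul_le_mul hgU (hI2U x h3) hI2nn (by positivity)
    refine h4.trans (le_of_eq ?_)
    field_simp
  -- lower bound for the main term
  have hmainL : 1/c - η/4 < g x * (∫ u in X..x, (g u)⁻¹) := by
    refine h2.trans_le ?_
    have hlb : 0 ≤ (1 - Real.exp ((c+ε)*(X - x))) / (c+ε) / ((c+ε) * Ψ x) := by
      have hE1 : Real.exp ((c+ε)*(X - x)) ≤ 1 := by
        rw [Real.exp_le_one_iff]
        nlinarith
      exact div_nonneg (div_nonneg (by linarith) hcε2.le) (mul_pos hcε2 (hΨpos x)).le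
    exact mul_le_mul hgL (hI2L x h3) hlb (hpos x).le
  rw [hsplit x, mul_add]
  constructor
  · linarith
  · linarith


end TailHelpers


lemma ode_part (φ : ℝ → ℝ) (hpos : ∀ x, 0 < φ x) (hanti : Antitone φ) (hcont : Continuous φ)
    {lam c μ₀ : ℝ} (hlam : 0 < lam) (hc : 0 < c)
    (μ : ℝ → ℝ) (hinit : μ 0 = μ₀)
    (hode : ∀ t : ℝ, 0 ≤ t → HasDerivAt μ (lam * φ (μ t)) t)
    (h1 : Tendsto (fun x => φ x * ∫ u in μ₀..x, (φ u)⁻¹) atTop (nhds (1/c))) :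
    Tendsto (fun t => t * (lam * φ (μ t))) atTop (nhds (1/c)) ∧
    Tendsto (fun t => μ t / Real.log t) atTop (nhds (1/c)) := by
  have hinv : Continuous fun u => (φ u)⁻¹ := hcont.inv₀ (fun u => (hpos u).ne')
  -- μ is monotone on [0, ∞)
  have hμmono : MonotoneOn μ (Ici 0) := by
    apply monotoneOn_of_deriv_nonneg (convex_Ici 0)
    · exact fun t ht => ((hode t ht).continuousAt).continuousWithinAt
    · intro t ht
      rw [interior_Ici] at ht
      exact ((hode t ht.le).differentiableAt).differentiableWithinAt
    · intro t ht
      rw [interior_Ici] at ht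
      rw [(hode t ht.le).deriv]
      exact (mul_pos hlam (hpos _)).le
  -- μ tends to infinity
  have hμtop : Tendsto μ atTop atTop := by
    rw [tendsto_atTop]
    intro b
    have hexists : ∃ t0, 0 ≤ t0 ∧ b ≤ μ t0 := by
      by_contra hcon
      push_neg at hcon
      set mv := lam * φ b with hmv
      have hmpos : 0 < mv := mul_pos hlam (hpos b)
      have hmono2 : MonotoneOn (fun t => μ t - mv * t) (Ici 0) := by
        apply monotoneOn_of_deriv_nonneg (convex_Ici 0)
        · exact fun t ht => (((hode t ht).sub ((hasDerivAt_id t).const_mul mv)).continuousAt).continuousWithinAt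
        · intro t ht
          rw [interior_Ici] at ht
          exact (((hode t ht.le).sub ((hasDerivAt_id t).const_mul mv)).differentiableAt).differentiableWithinAt
        · intro t ht
          rw [interior_Ici] at ht
          have hd : HasDerivAt (fun t => μ t - mv * t) (lam * φ (μ t) - mv * 1) t :=
            (hode t ht.le).sub ((hasDerivAt_id t).const_mul mv)
          rw [hd.deriv]
          have : φ b ≤ φ (μ t) := hanti (hcon t ht.le).le
          have : mv ≤ lam * φ (μ t) := by rw [hmv]; exact mul_le_mul_of_nonneg_left this hlam.le
          linarith
      set T := max 0 ((b - μ 0) / mv + 1) with hT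
      have hT0 : (0:ℝ) ≤ T := le_max_left _ _
      have hT1 : (b - μ 0) / mv + 1 ≤ T := le_max_right _ _
      have hg := hmono2 (self_mem_Ici) (mem_Ici.2 hT0) hT0
      simp only [mul_zero, sub_zero] at hg
      have hbT : b < μ 0 + mv * T := by
        have h2 : (b - μ 0) / mv * mv = b - μ 0 := div_mul_cancel₀ _ hmpos.ne'
        nlinarith [mul_le_mul_of_nonneg_right hT1 hmpos.le]
      have := hcon T hT0
      linarith
    obtain ⟨t0, ht0, hbt0⟩ := hexists
    exact eventually_atTop.2 ⟨t0, fun t ht => hbt0.trans (hμmono (mem_Ici.2 ht0)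
      (mem_Ici.2 (ht0.trans ht)) ht)⟩
  -- FTC primitive
  have hG : ∀ y : ℝ, HasDerivAt (fun z => ∫ u in μ₀..z, (φ u)⁻¹) (φ y)⁻¹ y := fun y =>
    intervalIntegral.integral_hasDerivAt_right (hinv.intervalIntegrable _ _)
      (hinv.stronglyMeasurableAtFilter _ _) hinv.continuousAt
  -- the key identity
  have hid : ∀ t : ℝ, 0 ≤ t → (∫ u in μ₀..μ t, (φ u)⁻¹) = lam * t := by
    intro t ht
    have key : ∀ s ∈ Icc (0:ℝ) t, (∫ u in μ₀..μ s, (φ u)⁻¹) - lam * s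
        = (∫ u in μ₀..μ 0, (φ u)⁻¹) - lam * 0 := by
      have hder : ∀ s ∈ Ico (0:ℝ) t,
          HasDerivWithinAt (fun s => (∫ u in μ₀..μ s, (φ u)⁻¹) - lam * s) 0 (Ici s) s := by
        intro s hs
        have hd1 : HasDerivAt (fun s => ∫ u in μ₀..μ s, (φ u)⁻¹)
            ((φ (μ s))⁻¹ * (lam * φ (μ s))) s := (hG (μ s)).comp s (hode s hs.1)
        have hd2 : HasDerivAt (fun s => (∫ u in μ₀..μ s, (φ u)⁻¹) - lam * s)
            ((φ (μ s))⁻¹ * (lam * φ (μ s)) - lam * 1) s :=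
          hd1.sub ((hasDerivAt_id s).const_mul lam)
        have hval : (φ (μ s))⁻¹ * (lam * φ (μ s)) - lam * 1 = 0 := by
          field_simp [(hpos (μ s)).ne']
          ring
        rw [hval] at hd2
        exact hd2.hasDerivWithinAt
      have hcont2 : ContinuousOn (fun s => (∫ u in μ₀..μ s, (φ u)⁻¹) - lam * s) (Icc 0 t) := by
        intro s hs
        have hd1 : HasDerivAt (fun s => ∫ u in μ₀..μ s, (φ u)⁻¹)
            ((φ (μ s))⁻¹ * (lam * φ (μ s))) s := (hG (μ s)).comp s (hode s hs.1)
        exact ((hd1.sub ((hasDerivAt_id s).const_mul lam)).continuousAt).continuousWithinAt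
      exact fun s hs => constant_of_has_deriv_right_zero hcont2 hder s hs
    have h := key t ⟨ht, le_refl t⟩
    rw [hinit] at h
    simp only [intervalIntegral.integral_same, mul_zero, sub_zero] at h
    linarith
  -- Part 2
  have part2 : Tendsto (fun t => t * (lam * φ (μ t))) atTop (nhds (1/c)) := by
    have hcomp : Tendsto (fun t => φ (μ t) * ∫ u in μ₀..μ t, (φ u)⁻¹) atTop (nhds (1/c)) :=
      h1.comp hμtop
    refine hcomp.congr' ?_
    filter_upwards [eventually_ge_atTop (0:ℝ)] with t ht
    rw [hid t ht]
    ring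
  refine ⟨part2, ?_⟩
  -- Part 3
  rw [Metric.tendsto_nhds]
  intro η hη
  obtain ⟨T₀, hT₀⟩ := Metric.tendsto_atTop.1 part2 (η/2) (by linarith)
  set T := max T₀ 1 with hTdef
  have hT1 : (1:ℝ) ≤ T := le_max_right _ _
  have hTpos : (0:ℝ) < T := lt_of_lt_of_le one_pos hT1
  have hbounds : ∀ t, T ≤ t → lam * φ (μ t) ≤ (1/c + η/2) / t ∧ (1/c - η/2) / t ≤ lam * φ (μ t) := by
    intro t ht
    have htpos : 0 < t := lt_of_lt_of_le hTpos ht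
    have h := hT₀ t (le_trans (le_max_left _ _) ht)
    rw [Real.dist_eq, abs_lt] at h
    constructor
    · rw [le_div_iff₀ htpos]
      nlinarith
    · rw [div_le_iff₀ htpos]
      nlinarith
  -- upper bound for μ
  have hup : ∀ t, T ≤ t → μ t ≤ μ T + (1/c + η/2) * (Real.log t - Real.log T) := by
    intro t ht
    have hmono3 : MonotoneOn (fun t => (1/c + η/2) * Real.log t - μ t) (Ici T) := by
      apply monotoneOn_of_deriv_nonneg (convex_Ici T)
      · intro s hs
        have hspos : (0:ℝ) < s := lt_of_lt_of_le hTpos hs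
        exact ((((Real.hasDerivAt_log hspos.ne').const_mul _).sub
          (hode s hspos.le)).continuousAt).continuousWithinAt
      · intro s hs
        rw [interior_Ici] at hs
        have hspos : (0:ℝ) < s := lt_trans hTpos hs
        exact ((((Real.hasDerivAt_log hspos.ne').const_mul _).sub
          (hode s hspos.le)).differentiableAt).differentiableWithinAt
      · intro s hs
        rw [interior_Ici] at hs
        have hspos : (0:ℝ) < s := lt_trans hTpos hs
        have hd : HasDerivAt (fun t => (1/c + η/2) * Real.log t - μ t)
            ((1/c + η/2) * s⁻¹ - lam * φ (μ s)) s :=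
          ((Real.hasDerivAt_log hspos.ne').const_mul _).sub (hode s hspos.le)
        rw [hd.deriv]
        have := (hbounds s hs.le).1
        rw [div_eq_mul_inv] at this
        linarith
    have := hmono3 (self_mem_Ici) (mem_Ici.2 ht) ht
    linarith
  have hlo : ∀ t, T ≤ t → μ T + (1/c - η/2) * (Real.log t - Real.log T) ≤ μ t := by
    intro t ht
    have hmono3 : MonotoneOn (fun t => μ t - (1/c - η/2) * Real.log t) (Ici T) := by
      apply monotoneOn_of_deriv_nonneg (convex_Ici T)
      · intro s hs
        have hspos : (0:ℝ) < s := lt_of_lt_of_le hTpos hs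
        exact (((hode s hspos.le).sub
          ((Real.hasDerivAt_log hspos.ne').const_mul _)).continuousAt).continuousWithinAt
      · intro s hs
        rw [interior_Ici] at hs
        have hspos : (0:ℝ) < s := lt_trans hTpos hs
        exact (((hode s hspos.le).sub
          ((Real.hasDerivAt_log hspos.ne').const_mul _)).differentiableAt).differentiableWithinAt
      · intro s hs
        rw [interior_Ici] at hs
        have hspos : (0:ℝ) < s := lt_trans hTpos hs
        have hd : HasDerivAt (fun t => μ t - (1/c - η/2) * Real.log t)
            (lam * φ (μ s) - (1/c - η/2) * s⁻¹) s :=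
          (hode s hspos.le).sub ((Real.hasDerivAt_log hspos.ne').const_mul _)
        rw [hd.deriv]
        have := (hbounds s hs.le).2
        rw [div_eq_mul_inv] at this
        linarith
    have := hmono3 (self_mem_Ici) (mem_Ici.2 ht) ht
    linarith
  -- combine
  set C1 := μ T - (1/c + η/2) * Real.log T with hC1
  set C2 := μ T - (1/c - η/2) * Real.log T with hC2
  have hquot : Tendsto (fun t => (|C1| + |C2|) / Real.log t) atTop (nhds 0) :=
    tendsto_const_nhds.div_atTop Real.tendsto_log_atTop
  have he : ∀ᶠ t in atTop, (|C1| + |C2|) / Real.log t < η/4 := by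
    have := Metric.tendsto_nhds.mp hquot (η/4) (by linarith)
    filter_upwards [this, Real.tendsto_log_atTop.eventually_gt_atTop 0] with t h hlog
    rw [Real.dist_eq, abs_sub_comm, abs_lt] at h
    linarith [h.2]
  filter_upwards [he, eventually_ge_atTop T, Real.tendsto_log_atTop.eventually_gt_atTop 0]
    with t hηt ht hlog
  rw [Real.dist_eq, abs_lt]
  have hu := hup t ht
  have hl := hlo t ht
  have habs : (|C1| + |C2|) ≥ 0 := by positivity
  have hC1le : C1 ≤ |C1| := le_abs_self _
  have hC1ge : -|C1| ≤ C1 := neg_abs_le _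
  have hC2le : C2 ≤ |C2| := le_abs_self _
  have hC2ge : -|C2| ≤ C2 := neg_abs_le _
  have hdivpos : 0 < Real.log t := hlog
  constructor
  · have h5 : C2 + (1/c - η/2) * Real.log t ≤ μ t := by rw [hC2]; linarith
    have h6 : (C2 + (1/c - η/2) * Real.log t) / Real.log t ≤ μ t / Real.log t :=
      (div_le_div_iff_of_pos_right hdivpos).2 h5
    rw [add_div, mul_div_cancel_right₀ _ hdivpos.ne'] at h6
    have h7 : -((|C1| + |C2|) / Real.log t) ≤ C2 / Real.log t := by
      rw [← neg_div]
      exact (div_le_div_iff_of_pos_right hdivpos).2 (by linarith)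
    linarith
  · have h5 : μ t ≤ C1 + (1/c + η/2) * Real.log t := by rw [hC1]; linarith
    have h6 : μ t / Real.log t ≤ (C1 + (1/c + η/2) * Real.log t) / Real.log t :=
      (div_le_div_iff_of_pos_right hdivpos).2 h5
    rw [add_div, mul_div_cancel_right₀ _ hdivpos.ne'] at h6
    have h7 : C1 / Real.log t ≤ (|C1| + |C2|) / Real.log t :=
      (div_le_div_iff_of_pos_right hdivpos).2 (by linarith)
    linarith

set_option maxHeartbeats 1000000 in
/-- if M = +∞ and φ(x)/∫_x^∞ φ(u)du → c > 0 as x → ∞, then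
φ(x)·∫_{μ₀}^x du/φ(u) → 1/c; consequently t·μ'(t) → 1/c and μ(t)/ln t → 1/c. -/
theorem stmt18 {Ω : Type*} [MeasurableSpace Ω] (P : Measure Ω) [IsProbabilityMeasure P]
    (X : Ω → ℝ) (hX : Measurable X)
    (hint : Integrable (fun ω => max (X ω) 0) P)
    (F : ℝ → ℝ) (hF : ∀ x, F x = (P {ω | X ω ≤ x}).toReal)
    (hub : ∀ x : ℝ, F x < 1)
    (φ : ℝ → ℝ) (hφ : ∀ x, φ x = ∫ u in Ioi x, (1 - F u))
    (hφint : ∀ x : ℝ, IntegrableOn φ (Ioi x))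
    (c lam μ₀ : ℝ) (hc : 0 < c) (hlam : 0 < lam) (hμ₀ : 0 ≤ μ₀)
    (hlim : Tendsto (fun x => φ x / ∫ u in Ioi x, φ u) atTop (nhds c))
    (μ : ℝ → ℝ) (hinit : μ 0 = μ₀)
    (hode : ∀ t : ℝ, 0 ≤ t → HasDerivAt μ (lam * φ (μ t)) t) :
    Tendsto (fun x => φ x * ∫ u in μ₀..x, (φ u)⁻¹) atTop (nhds (1 / c)) ∧
    Tendsto (fun t => t * (lam * φ (μ t))) atTop (nhds (1 / c)) ∧
    Tendsto (fun t => μ t / Real.log t) atTop (nhds (1 / c)) := by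
  have hFmono : Monotone F := by
    intro x y hxy
    rw [hF x, hF y]
    exact ENNReal.toReal_mono (measure_ne_top P _) (measure_mono (fun ω h => le_trans h hxy))
  have hF0 : ∀ x, 0 ≤ F x := fun x => by rw [hF]; exact ENNReal.toReal_nonneg
  have h1F : ∀ u : ℝ, 0 < 1 - F u := fun u => by linarith [hub u]
  have h1Fanti : Antitone (fun u => 1 - F u) := fun a b hab => by
    simp only; linarith [hFmono hab]
  have h1Fmeas : Measurable fun u => 1 - F u := measurable_const.sub hFmono.measurable
  have h1F1 : ∀ u : ℝ, 1 - F u ≤ 1 := fun u => by linarith [hF0 u]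
  have hGint : ∀ x : ℝ, IntegrableOn (fun u => 1 - F u) (Ioi x) volume := by
    by_cases hex : ∃ x0 : ℝ, IntegrableOn (fun u => 1 - F u) (Ioi x0) volume
    · obtain ⟨x0, hx0⟩ := hex
      intro x
      rcases le_total x0 x with h | h
      · exact hx0.mono_set (Ioi_subset_Ioi h)
      · have hb : IntegrableOn (fun u => 1 - F u) (Ioc x x0) volume := by
          have hconst : IntegrableOn (fun _ : ℝ => (1:ℝ)) (Ioc x x0) volume :=
            integrableOn_const (by simp)
          refine Integrable.mono' hconst h1Fmeas.aestronglyMeasurable.restrict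
            (Eventually.of_forall fun u => ?_)
          rw [Real.norm_eq_abs, abs_le]
          exact ⟨by linarith [h1F u], h1F1 u⟩
        have := hb.union hx0
        rwa [Ioc_union_Ioi_eq_Ioi h] at this
    · exfalso
      push_neg at hex
      have hzero : ∀ x : ℝ, φ x = 0 := fun x => by
        rw [hφ x]; exact integral_undef (hex x)
      have h0 : Tendsto (fun x => φ x / ∫ u in Ioi x, φ u) atTop (nhds 0) := by
        have heq : (fun x => φ x / ∫ u in Ioi x, φ u) = fun _ => (0:ℝ) := by
          funext x; rw [hzero x, zero_div]
        rw [heq]; exact tendsto_const_nhds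
      exact hc.ne' (tendsto_nhds_unique hlim h0)
  have hφpos : ∀ x, 0 < φ x := fun x => by
    rw [hφ x]; exact tail_pos h1Fanti h1F (hGint x)
  have hφanti : Antitone φ := by
    intro a b hab
    rw [hφ a, hφ b]
    exact tail_anti hGint (fun u => (h1F u).le) hab
  have hφcont : Continuous φ := by
    have key : ∀ a b : ℝ, a ≤ b → 0 ≤ φ a - φ b ∧ φ a - φ b ≤ b - a := by
      intro a b hab
      have hs := tail_sub (hGint a) hab
      rw [← hφ a, ← hφ b] at hs
      have hii : IntervalIntegrable (fun u => 1 - F u) volume a b :=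
        (intervalIntegrable_iff_integrableOn_Ioc_of_le hab).2
          ((hGint a).mono_set Ioc_subset_Ioi_self)
      constructor
      · rw [hs]
        exact intervalIntegral.integral_nonneg hab (fun u _ => (h1F u).le)
      · rw [hs]
        have h2 := intervalIntegral.integral_mono_on hab hii
          intervalIntegrable_const (fun u _ => h1F1 u)
        simpa using h2
    have hlip : LipschitzWith 1 φ := by
      apply LipschitzWith.of_dist_le_mul
      intro x y
      rw [Real.dist_eq, Real.dist_eq, NNReal.coe_one, one_mul]
      rcases le_total x y with h | h
      · have hk := key x y h
        rw [abs_of_nonneg hk.1, abs_of_nonpos (by linarith : x - y ≤ 0)]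
        linarith [hk.2]
      · have hk := key y x h
        rw [abs_of_nonpos (by linarith [hk.1] : φ x - φ y ≤ 0),
          abs_of_nonneg (by linarith : 0 ≤ x - y)]
        linarith [hk.2]
    exact hlip.continuous
  have part1 := key_limit hφpos hφanti hφcont hφint hc hlim μ₀
  obtain ⟨part2, part3⟩ := ode_part φ hφpos hφanti hφcont hlam hc μ hinit hode part1
  exact ⟨part1, part2, part3⟩
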